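/- For every integer k ≥ 2, the number k+2 is the least positive integer N with the following property: for every function χ from the subsets of [N] to {1,…,k} there exist four pairwise distinct subsets A_1, B_1, A_2, B_2 of [N], all with the same χ-value, such that A_1 ⊆ B_1 and A_2 ⊆ B_2. (That is, the weak Boolean Ramsey number R_k(𝓑 | M_2) equals k+2.) -/

import Mathlib

namespace Stmt4Aux

open Fin.NatCast

/-- cyclic interval of length `t` starting at `s` in `Fin (k+2)` -/
def intv (k : ℕ) (s : Fin (k+2)) (t : ℕ) : Finset (Fin (k+2)) :=
  (Finset.range t).image (fun j : ℕ => s + (j : Fin (k+2)))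

lemma cast_inj_fin {k j j' : ℕ} (hj : j < k+2) (hj' : j' < k+2)
    (h : (j : Fin (k+2)) = (j' : Fin (k+2))) : j = j' := by
  have := congrArg Fin.val h
  rwa [Fin.val_cast_of_lt hj, Fin.val_cast_of_lt hj'] at this

lemma intv_card {k : ℕ} {s : Fin (k+2)} {t : ℕ} (h : t ≤ k+2) : (intv k s t).card = t := by
  rw [intv, Finset.card_image_of_injOn, Finset.card_range]
  intro j hj j' hj' hjj'
  simp only [Finset.coe_range, Set.mem_Iio] at hj hj'
  exact cast_inj_fin (lt_of_lt_of_le hj h) (lt_of_lt_of_le hj' h) (add_left_cancel hjj')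

lemma intv_mono {k : ℕ} {s : Fin (k+2)} {t t' : ℕ} (h : t ≤ t') :
    intv k s t ⊆ intv k s t' :=
  Finset.image_subset_image (Finset.range_subset_range.mpr h)

lemma start_mem {k : ℕ} {s : Fin (k+2)} {t : ℕ} (ht : 1 ≤ t) : s ∈ intv k s t := by
  simp only [intv, Finset.mem_image, Finset.mem_range]
  exact ⟨0, ht, by simp⟩

lemma pred_not_mem {k : ℕ} {s : Fin (k+2)} {t : ℕ} (ht : t ≤ k+1) : s - 1 ∉ intv k s t := by
  intro hmem
  simp only [intv, Finset.mem_image, Finset.mem_range] at hmem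
  obtain ⟨i, hi, hie⟩ := hmem
  have h1 : s + ((i : Fin (k+2)) + 1) = s + 0 := by
    rw [← add_assoc, hie, add_zero, sub_add_cancel]
  have h2 : ((i+1 : ℕ) : Fin (k+2)) = ((0 : ℕ) : Fin (k+2)) := by
    push_cast
    exact add_left_cancel h1
  have := cast_inj_fin (by omega) (by omega) h2
  omega

lemma intv_injective {k : ℕ} {s s' : Fin (k+2)} {t t' : ℕ}
    (ht1 : 1 ≤ t) (ht : t ≤ k+1) (ht1' : 1 ≤ t') (ht' : t' ≤ k+1)
    (he : intv k s t = intv k s' t') : s = s' := by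
  have hmem : s' ∈ intv k s t := by rw [he]; exact start_mem ht1'
  simp only [intv, Finset.mem_image, Finset.mem_range] at hmem
  obtain ⟨j, hj, hje⟩ := hmem
  rcases Nat.eq_zero_or_pos j with h0 | h1
  · subst h0
    simpa using hje
  · exfalso
    apply pred_not_mem ht' (s := s')
    rw [← he]
    simp only [intv, Finset.mem_image, Finset.mem_range]
    refine ⟨j - 1, by omega, ?_⟩
    have hc : ((j - 1 : ℕ) : Fin (k+2)) + 1 = ((j : ℕ) : Fin (k+2)) := by
      have : ((j - 1 : ℕ) : Fin (k+2)) + 1 = (((j-1)+1 : ℕ) : Fin (k+2)) := by push_cast; ring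
      rw [this]
      congr 1
      omega
    have : ((j - 1 : ℕ) : Fin (k+2)) = ((j : ℕ) : Fin (k+2)) - 1 := by
      rw [eq_sub_iff_add_eq, hc]
    rw [this, ← hje]
    abel

end Stmt4Aux

open Stmt4Aux in
theorem stmt4 (k : ℕ) (hk : 2 ≤ k) :
    IsLeast {N : ℕ | 0 < N ∧ ∀ χ : Finset (Fin N) → Fin k,
        ∃ A₁ B₁ A₂ B₂ : Finset (Fin N),
          A₁ ≠ B₁ ∧ A₁ ≠ A₂ ∧ A₁ ≠ B₂ ∧ B₁ ≠ A₂ ∧ B₁ ≠ B₂ ∧ A₂ ≠ B₂ ∧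
          χ B₁ = χ A₁ ∧ χ A₂ = χ A₁ ∧ χ B₂ = χ A₁ ∧
          A₁ ⊆ B₁ ∧ A₂ ⊆ B₂}
      (k + 2) := by
  constructor
  · -- k+2 suffices
    refine ⟨by omega, fun χ => ?_⟩
    -- on each cyclic maximal chain's interior, find a monochromatic pair
    have H : ∀ s : Fin (k+2), ∃ p q : Fin (k+1), p.val < q.val ∧
        χ (intv k s (p.val+1)) = χ (intv k s (q.val+1)) := by
      intro s
      obtain ⟨p, q, hpq, hc⟩ := Fintype.exists_ne_map_eq_of_card_lt
        (fun p : Fin (k+1) => χ (intv k s (p.val+1))) (by simp)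
      rcases lt_or_gt_of_ne (fun h => hpq (Fin.ext h) : p.val ≠ q.val) with h | h
      · exact ⟨p, q, h, hc⟩
      · exact ⟨q, p, h, hc.symm⟩
    choose p q hlt hcol using H
    -- pigeonhole over the k+2 chains
    obtain ⟨s, s', hss, hcs⟩ := Fintype.exists_ne_map_eq_of_card_lt
      (fun s : Fin (k+2) => χ (intv k s ((p s).val+1))) (by simp)
    refine ⟨intv k s ((p s).val+1), intv k s ((q s).val+1),
            intv k s' ((p s').val+1), intv k s' ((q s').val+1),
            ?_, ?_, ?_, ?_, ?_, ?_, (hcol s).symm, hcs.symm,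
            (hcol s').symm.trans hcs.symm, intv_mono (by have := hlt s; omega), intv_mono (by have := hlt s'; omega)⟩
    · intro h
      have := congrArg Finset.card h
      rw [intv_card (by omega), intv_card (by omega)] at this
      exact absurd this (by have := hlt s; omega)
    · exact fun h => hss (intv_injective (by omega) (by omega) (by omega) (by omega) h)
    · exact fun h => hss (intv_injective (by omega) (by omega) (by omega) (by omega) h)
    · exact fun h => hss (intv_injective (by omega) (by omega) (by omega) (by omega) h)
    · exact fun h => hss (intv_injective (by omega) (by omega) (by omega) (by omega) h)
    · intro h
      have := congrArg Finset.card h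
      rw [intv_card (by omega), intv_card (by omega)] at this
      exact absurd this (by have := hlt s'; omega)
  · -- lower bound
    rintro N ⟨hNpos, hN⟩
    by_contra hlt
    push_neg at hlt
    have hNle : N ≤ k + 1 := by omega
    obtain ⟨A₁, B₁, A₂, B₂, h12, h13, h14, h23, h24, h34, hc1, hc2, hc3, hs1, hs2⟩ :=
      hN (fun A => (⟨min (A.card - 1) (k-1), by omega⟩ : Fin k))
    have ha : A₁.card < B₁.card := Finset.card_lt_card (hs1.ssubset_of_ne h12)
    have hb : A₂.card < B₂.card := Finset.card_lt_card (hs2.ssubset_of_ne h34)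
    have e1 : min (B₁.card - 1) (k-1) = min (A₁.card - 1) (k-1) := congrArg Fin.val hc1
    have e2 : min (A₂.card - 1) (k-1) = min (A₁.card - 1) (k-1) := congrArg Fin.val hc2
    have e3 : min (B₂.card - 1) (k-1) = min (A₁.card - 1) (k-1) := congrArg Fin.val hc3
    have hB1 : B₁.card ≤ N := by simpa using Finset.card_le_univ B₁
    have hB2 : B₂.card ≤ N := by simpa using Finset.card_le_univ B₂
    have key : (A₁.card = 0 ∧ A₂.card = 0) ∨ (B₁.card = N ∧ B₂.card = N) := by omega
    rcases key with ⟨k1, k2⟩ | ⟨k1, k2⟩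
    · exact h13 ((Finset.card_eq_zero.mp k1).trans (Finset.card_eq_zero.mp k2).symm)
    · exact h24 ((Finset.eq_univ_of_card _ (by simpa using k1)).trans
        (Finset.eq_univ_of_card _ (by simpa using k2)).symm)
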